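/- arXiv:1610.00046 — 8 statements merged into one kernel-verified Lean document; each statement's English description precedes it below -/
import Mathlib

section
/- Let B be an abelian group of cardinality 2^m, where m is an infinite cardinal. Then the set of subgroups of B has cardinality exactly 2^(2^m). -/
open Cardinal

universe u

lemma aux_many {G : Type u} [AddCommGroup G] {ι : Type u} (f : ι → G)
    (hf : ∀ (s : Set ι) (i : ι), f i ∈ AddSubgroup.closure (f '' s) → i ∈ s) :
    (2 : Cardinal) ^ #ι ≤ #(AddSubgroup G) := by
  have hinj : Function.Injective (fun s : Set ι => AddSubgroup.closure (f '' s)) := by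
    intro s t h
    simp only at h
    ext i
    constructor
    · intro hi
      have : f i ∈ AddSubgroup.closure (f '' s) :=
        AddSubgroup.subset_closure (Set.mem_image_of_mem f hi)
      rw [h] at this
      exact hf t i this
    · intro hi
      have : f i ∈ AddSubgroup.closure (f '' t) :=
        AddSubgroup.subset_closure (Set.mem_image_of_mem f hi)
      rw [← h] at this
      exact hf s i this
  calc (2 : Cardinal) ^ #ι = #(Set ι) := mk_set.symm
    _ ≤ #(AddSubgroup G) := mk_le_of_injective hinj

lemma aux_indep {R : Type} [Ring R] [Nontrivial R] {G : Type u} [AddCommGroup G] [Module R G]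
    {ι : Type u} {f : ι → G} (hf : LinearIndependent R f) :
    (2 : Cardinal) ^ #ι ≤ #(AddSubgroup G) := by
  apply aux_many f
  intro s i h
  by_contra hi
  apply hf.notMem_span_image hi
  have hle : AddSubgroup.closure (f '' s) ≤ (Submodule.span R (f '' s)).toAddSubgroup :=
    (AddSubgroup.closure_le _).mpr Submodule.subset_span
  exact hle h

lemma aux_sub {G : Type u} [AddCommGroup G] (H : AddSubgroup G) :
    #(AddSubgroup H) ≤ #(AddSubgroup G) :=
  mk_le_of_injective (AddSubgroup.map_injective H.subtype_injective)

lemma aux_quot {G : Type u} [AddCommGroup G] (N : AddSubgroup G) :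
    #(AddSubgroup (G ⧸ N)) ≤ #(AddSubgroup G) :=
  mk_le_of_injective (AddSubgroup.comap_injective (QuotientAddGroup.mk'_surjective N))

lemma aux_upper {G : Type u} [AddCommGroup G] :
    #(AddSubgroup G) ≤ (2 : Cardinal) ^ #G := by
  calc #(AddSubgroup G) ≤ #(Set G) :=
        mk_le_of_injective (SetLike.coe_injective (A := AddSubgroup G))
    _ = 2 ^ #G := mk_set
lemma aux_span_card {G : Type u} [AddCommGroup G] (I : Set G) :
    #(Submodule.span ℤ I) ≤ max #I ℵ₀ := by
  have hrange : Submodule.span ℤ (Set.range ((↑) : I → G)) = Submodule.span ℤ I := by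
    rw [Subtype.range_coe]
  have h1 : #(Submodule.span ℤ I) ≤ #(I →₀ ℤ) := by
    have hsurj := LinearMap.surjective_rangeRestrict (Finsupp.linearCombination ℤ ((↑) : I → G))
    have := mk_le_of_surjective hsurj
    rwa [Finsupp.range_linearCombination, hrange] at this
  refine h1.trans ?_
  cases finite_or_infinite I with
  | inl hfin =>
    haveI : Countable (I →₀ ℤ) :=
      (DFunLike.coe_injective (F := I →₀ ℤ)).countable
    exact (mk_le_aleph0).trans (le_max_right _ _)
  | inr hinf =>
    rw [mk_finsupp_lift_of_infinite]
    simp only [lift_id, lift_uzero]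
    apply max_le
    · exact le_max_of_le_left (by simp [mk_subtype_le])
    · exact le_max_of_le_right (by simp [mk_int])

lemma aux_tf {G : Type u} [AddCommGroup G] [NoZeroSMulDivisors ℤ G] (hG : ℵ₀ < #G) :
    (2 : Cardinal) ^ #G ≤ #(AddSubgroup G) := by
  obtain ⟨I, hind, hmax⟩ := exists_maximal_linearIndepOn ℤ (id : G → G)
  have key : ∀ x : G, ∃ a : ℤ, a ≠ 0 ∧ a • x ∈ Submodule.span ℤ I := by
    intro x
    by_cases hx : x ∈ I
    · exact ⟨1, one_ne_zero, by simpa using Submodule.subset_span hx⟩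
    · obtain ⟨a, ha, h⟩ := hmax x hx
      exact ⟨a, ha, by simpa using h⟩
  choose a ha hmem using key
  have hinj : Function.Injective
      (fun x : G => ((a x, ⟨a x • x, hmem x⟩) : ℤ × Submodule.span ℤ I)) := by
    intro x y h
    simp only [Prod.mk.injEq, Subtype.mk.injEq] at h
    obtain ⟨h1, h2⟩ := h
    rw [h1] at h2
    have : a y • (x - y) = 0 := by rw [smul_sub, h2, sub_self]
    rcases smul_eq_zero.mp this with h' | h'
    · exact absurd h' (ha y)
    · exact sub_eq_zero.mp h'
  have hcard : #G ≤ ℵ₀ * #(Submodule.span ℤ I) := by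
    have := mk_le_of_injective hinj
    rwa [mk_prod, mk_int, lift_aleph0, lift_uzero] at this
  have hIcard : #G ≤ #I := by
    by_contra hI
    push_neg at hI
    have h1 : #(Submodule.span ℤ I) ≤ max #I ℵ₀ := aux_span_card I
    have h2 : #G ≤ ℵ₀ * max #I ℵ₀ := hcard.trans (by gcongr)
    have h3 : ℵ₀ * max #I ℵ₀ < #G := by
      apply Cardinal.mul_lt_of_lt hG.le hG
      exact max_lt hI hG
    exact absurd h2 (not_le.mpr h3)
  have hI' : LinearIndependent ℤ (fun x : I => (x : G)) := hind
  have := aux_indep hI'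
  refine le_trans ?_ this
  exact power_le_power_left two_ne_zero hIcard

open AddSubgroup in
lemma aux_prime {B : Type u} [AddCommGroup B] {κ : Cardinal.{u}} (hκ : ℵ₀ < κ)
    {p : ℕ} (hp : p.Prime) (hcard : κ ≤ #(B[(p:ℤ)])) :
    (2 : Cardinal) ^ κ ≤ #(AddSubgroup B) := by
  haveI := Fact.mk hp
  letI : Module (ZMod p) (B[(p:ℕ)]) := AddSubgroup.torsionBy.zmodModule
  set V := (B[(p:ℤ)]) with hV
  let b := Module.Basis.ofVectorSpace (ZMod p) V
  have hbi : LinearIndependent (ZMod p) (b : _ → V) := b.linearIndependent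
  have hcard2 : κ ≤ #(Module.Basis.ofVectorSpaceIndex (ZMod p) V) := by
    have hVc : κ ≤ #(Module.Basis.ofVectorSpaceIndex (ZMod p) V →₀ ZMod p) := by
      have := (b.repr.toEquiv).cardinal_eq
      rwa [this] at hcard
    cases finite_or_infinite (Module.Basis.ofVectorSpaceIndex (ZMod p) V) with
    | inl hfin =>
      exfalso
      haveI : Finite (Module.Basis.ofVectorSpaceIndex (ZMod p) V →₀ ZMod p) :=
        Finite.of_injective _ (DFunLike.coe_injective)
      exact absurd (hVc.trans_lt (lt_aleph0_of_finite _)) (not_lt.mpr hκ.le)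
    | inr hinf =>
      rw [mk_finsupp_lift_of_infinite, lift_uzero] at hVc
      rcases le_max_iff.mp hVc with h | h
      · exact h
      · exfalso
        have hlt : lift.{u} #(ZMod p) < ℵ₀ := by
          simp only [lift_lt_aleph0]
          exact lt_aleph0_of_finite _
        exact absurd (h.trans_lt hlt) (not_lt.mpr hκ.le)
  have h1 : (2 : Cardinal) ^ κ ≤ (2:Cardinal) ^ #(Module.Basis.ofVectorSpaceIndex (ZMod p) V) :=
    power_le_power_left two_ne_zero hcard2
  have h2 := aux_indep hbi
  exact h1.trans (h2.trans (aux_sub _))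

open AddSubgroup in
lemma aux_exists_k {B : Type u} [AddCommGroup B] (m : Cardinal.{u}) (hm : ℵ₀ ≤ m)
    (hT : (2:Cardinal) ^ m ≤ #((Submodule.torsion ℤ B).toAddSubgroup)) :
    ∃ k : ℕ, 0 < k ∧ (2:Cardinal) ^ m ≤ #(B[(k:ℤ)]) := by
  set κ := (2:Cardinal) ^ m with hκdef
  by_contra hcon
  push_neg at hcon
  have hall : ∀ k : ℕ, #(B[((k+1 : ℕ):ℤ)]) < κ := fun k => hcon (k+1) (Nat.succ_pos k)
  have hsub : ((Submodule.torsion ℤ B).toAddSubgroup : Set B) ⊆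
      ⋃ (n : ULift.{u} ℕ), ((B[((n.down + 1 : ℕ):ℤ)] : AddSubgroup B) : Set B) := by
    intro x hx
    rw [SetLike.mem_coe, Submodule.mem_toAddSubgroup, Submodule.mem_torsion_iff] at hx
    obtain ⟨c, hc⟩ := hx
    have hc0 : (c : ℤ) ≠ 0 := nonZeroDivisors.coe_ne_zero c
    set n := (c : ℤ).natAbs with hn
    have hn1 : 1 ≤ n := by
      rw [hn]
      omega
    have hc' : ((c : ℤ)) • x = 0 := hc
    have hsmul : ((n : ℤ)) • x = 0 := by
      rcases Int.natAbs_eq (c : ℤ) with h | h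
      · rw [← h]; exact hc'
      · rw [h, neg_smul, neg_eq_zero] at hc'
        exact hc'
    refine Set.mem_iUnion.mpr ⟨⟨n - 1⟩, ?_⟩
    have hn' : (n - 1) + 1 = n := by omega
    rw [SetLike.mem_coe]
    show x ∈ B[(((n - 1 : ℕ) + 1 : ℕ):ℤ)]
    rw [hn']
    exact (Submodule.mem_torsionBy_iff _ _).mpr hsmul
  have h1 : κ ≤ #(⋃ (n : ULift.{u} ℕ), ((B[((n.down + 1 : ℕ):ℤ)] : AddSubgroup B) : Set B)) :=
    hT.trans (mk_le_mk_of_subset hsub)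
  have h2 := mk_iUnion_le (fun n : ULift.{u} ℕ => ((B[((n.down + 1 : ℕ):ℤ)] : AddSubgroup B) : Set B))
  have hUL : #(ULift.{u} ℕ) = ℵ₀ := by simp
  have hκinf : ℵ₀ < κ := hm.trans_lt (cantor m)
  have hsup : ⨆ (n : ULift.{u} ℕ), #((B[((n.down + 1 : ℕ):ℤ)] : AddSubgroup B) : Set B) < κ := by
    apply Ordinal.iSup_lt
    · rw [hUL, hκdef]
      exact hm.trans_lt (Cardinal.lt_cof_power hm one_lt_two)
    · intro n
      exact hall n.down
  have h3 : #(ULift.{u} ℕ) * ⨆ (n : ULift.{u} ℕ),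
      #((B[((n.down + 1 : ℕ):ℤ)] : AddSubgroup B) : Set B) < κ := by
    rw [hUL]
    exact Cardinal.mul_lt_of_lt hκinf.le hκinf hsup
  exact absurd (h1.trans h2) (not_le.mpr h3)

open AddSubgroup in
lemma aux_find_prime {B : Type u} [AddCommGroup B] {κ : Cardinal.{u}} (hκ : ℵ₀ < κ)
    (hex : ∃ k : ℕ, 0 < k ∧ κ ≤ #(B[(k:ℤ)])) :
    ∃ p : ℕ, p.Prime ∧ κ ≤ #(B[(p:ℤ)]) := by
  classical
  let k₀ := Nat.find hex
  obtain ⟨hk0pos, hk0⟩ : 0 < k₀ ∧ κ ≤ #(B[(k₀:ℤ)]) := Nat.find_spec hex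
  have hk0ne1 : k₀ ≠ 1 := by
    intro h
    rw [h] at hk0
    have hsub : Subsingleton (B[((1:ℕ):ℤ)]) := by
      constructor
      rintro ⟨x, hx⟩ ⟨y, hy⟩
      rw [AddSubgroup.torsionBy, Submodule.mem_toAddSubgroup, Submodule.mem_torsionBy_iff] at hx hy
      simp only [Nat.cast_one, one_smul] at hx hy
      simp [hx, hy]
    have h1 : #(B[((1:ℕ):ℤ)]) ≤ 1 := le_one_iff_subsingleton.mpr hsub
    exact absurd (hk0.trans h1) (not_le.mpr (one_lt_aleph0.trans hκ))
  set p := k₀.minFac with hpdef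
  have hp : p.Prime := Nat.minFac_prime hk0ne1
  set d := k₀ / p with hddef
  have hpd : p * d = k₀ := Nat.mul_div_cancel' k₀.minFac_dvd
  have hdpos : 0 < d := by
    rcases Nat.eq_zero_or_pos d with h | h
    · rw [h, mul_zero] at hpd; omega
    · exact h
  have hdlt : d < k₀ := Nat.div_lt_self hk0pos hp.one_lt
  have hd : #(B[(d:ℤ)]) < κ := by
    have := Nat.find_min hex hdlt
    push_neg at this
    exact this hdpos
  let φ : (B[(k₀:ℤ)]) →+ B :=
    { toFun := fun x => (d:ℤ) • (x : B)
      map_zero' := by simp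
      map_add' := fun x y => by simp [smul_add] }
  have hker : #(φ.ker) ≤ #(B[(d:ℤ)]) := by
    refine mk_le_of_injective (f := fun x : φ.ker => (⟨(x : B[(k₀:ℤ)]) , ?_⟩ : B[(d:ℤ)])) ?_
    · rw [AddSubgroup.torsionBy, Submodule.mem_toAddSubgroup, Submodule.mem_torsionBy_iff]
      exact x.2
    · intro a b h
      simp only [Subtype.mk.injEq, SetLike.coe_eq_coe] at h
      exact h
  have hrange : (φ.range : Set B) ⊆ (B[(p:ℤ)] : Set B) := by
    rintro y ⟨x, rfl⟩
    rw [SetLike.mem_coe, AddSubgroup.torsionBy, Submodule.mem_toAddSubgroup, Submodule.mem_torsionBy_iff]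
    show (p:ℤ) • ((d:ℤ) • (x : B)) = 0
    rw [smul_smul, ← Int.natCast_mul, hpd]
    exact Submodule.smul_coe_torsionBy _ x
  have hcardeq : #(B[(k₀:ℤ)]) = #(φ.range) * #(φ.ker) := by
    have e1 := AddSubgroup.addGroupEquivQuotientProdAddSubgroup (s := φ.ker)
    have e2 := QuotientAddGroup.quotientKerEquivRange φ
    rw [mk_congr e1, mk_prod, lift_id, lift_id, mk_congr e2.toEquiv]
  have hrangeκ : κ ≤ #(φ.range) := by
    by_contra h
    push_neg at h
    have : #(φ.range) * #(φ.ker) < κ :=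
      Cardinal.mul_lt_of_lt hκ.le h (hker.trans_lt hd)
    rw [← hcardeq] at this
    exact absurd hk0 (not_le.mpr this)
  exact ⟨p, hp, hrangeκ.trans (mk_le_mk_of_subset hrange)⟩

theorem stmt_0 {B : Type u} [AddCommGroup B] (m : Cardinal.{u})
    (hm : ℵ₀ ≤ m) (hB : #B = (2 : Cardinal) ^ m) :
    #(AddSubgroup B) = (2 : Cardinal) ^ ((2 : Cardinal) ^ m) := by
  have hκinf : ℵ₀ < (2:Cardinal) ^ m := hm.trans_lt (cantor m)
  refine le_antisymm (aux_upper.trans (by rw [hB])) ?_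
  set T' := (Submodule.torsion ℤ B).toAddSubgroup with hT'
  have hprod : (2:Cardinal) ^ m = #(B ⧸ T') * #(T') := by
    rw [← hB, mk_congr (AddSubgroup.addGroupEquivQuotientProdAddSubgroup (s := T')),
      mk_prod, lift_id, lift_id]
  have hcases : (2:Cardinal) ^ m ≤ #(B ⧸ T') ∨ (2:Cardinal) ^ m ≤ #(T') := by
    by_contra h
    push_neg at h
    have := Cardinal.mul_lt_of_lt hκinf.le h.1 h.2
    rw [← hprod] at this
    exact lt_irrefl _ this
  rcases hcases with hq | ht
  · -- torsion-free quotient case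
    haveI : NoZeroSMulDivisors ℤ (B ⧸ T') := by
      constructor
      intro a x h
      by_cases ha : a = 0
      · exact Or.inl ha
      right
      obtain ⟨b, rfl⟩ := QuotientAddGroup.mk'_surjective T' x
      have hmem : a • b ∈ T' := by
        rw [← QuotientAddGroup.eq_zero_iff, ← QuotientAddGroup.mk'_apply, map_zsmul]
        exact h
      rw [hT', Submodule.mem_toAddSubgroup, Submodule.mem_torsion_iff] at hmem
      obtain ⟨c, hc⟩ := hmem
      have hc' : ((c:ℤ) * a) • b = 0 := by
        rw [mul_smul]
        exact hc
      have hb : b ∈ T' := by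
        rw [hT', Submodule.mem_toAddSubgroup, Submodule.mem_torsion_iff]
        exact ⟨⟨(c:ℤ) * a, mul_mem c.2 (mem_nonZeroDivisors_of_ne_zero ha)⟩, hc'⟩
      rw [QuotientAddGroup.mk'_apply, QuotientAddGroup.eq_zero_iff]
      exact hb
    have hQinf : ℵ₀ < #(B ⧸ T') := hκinf.trans_le hq
    calc (2:Cardinal) ^ ((2:Cardinal) ^ m) ≤ (2:Cardinal) ^ #(B ⧸ T') :=
          power_le_power_left two_ne_zero hq
      _ ≤ #(AddSubgroup (B ⧸ T')) := aux_tf hQinf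
      _ ≤ #(AddSubgroup B) := aux_quot T'
  · obtain ⟨p, hp, hpc⟩ := aux_find_prime hκinf (aux_exists_k m hm ht)
    exact aux_prime hκinf hp hpc
end

section
/- Let B be an abelian p-group of cardinality 2^m, where m is an infinite cardinal and p is a prime. Then the subgroup B(p) = {x ∈ B : p·x = 0} of elements killed by p has cardinality 2^m. -/
open Cardinal

/-- If `B` is an abelian `p`-group of cardinality `2 ^ m` with `m` infinite,
then the subgroup `B(p) = {x : p • x = 0}` has cardinality `2 ^ m`. -/
theorem stmt_1 {B : Type u} [AddCommGroup B] (p : ℕ) (hp : p.Prime)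
    (hpgroup : ∀ x : B, ∃ n : ℕ, p ^ n • x = 0)
    (m : Cardinal.{u}) (hm : ℵ₀ ≤ m) (hB : #B = (2 : Cardinal) ^ m) :
    #{x : B // p • x = 0} = (2 : Cardinal) ^ m := by
  classical
  set k : Cardinal.{u} := #{x : B // p • x = 0} with hk
  set c : Cardinal.{u} := max k ℵ₀ with hc
  have hcω : ℵ₀ ≤ c := le_max_right _ _
  have step : ∀ n : ℕ,
      #{x : B // p ^ (n + 1) • x = 0} ≤ #{x : B // p ^ n • x = 0} * k := by
    intro n
    set f : {x : B // p ^ (n + 1) • x = 0} → {x : B // p ^ n • x = 0} :=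
      fun x => ⟨p • x.1, by rw [smul_smul, ← pow_succ]; exact x.2⟩ with hf
    choose sec hsec using fun y : Set.range f => y.2
    have hinj : Function.Injective (fun x : {x : B // p ^ (n + 1) • x = 0} =>
        ((f x, ⟨x.1 - (sec ⟨f x, ⟨x, rfl⟩⟩).1, by
          have h1 : p • x.1 = (f x).1 := rfl
          have h2 : p • (sec ⟨f x, ⟨x, rfl⟩⟩).1 = (f (sec ⟨f x, ⟨x, rfl⟩⟩)).1 := rfl
          rw [smul_sub, h1, h2, hsec]
          exact sub_self _⟩) :
          {x : B // p ^ n • x = 0} × {x : B // p • x = 0})) := by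
      intro x y hxy
      have h1 : f x = f y := congrArg Prod.fst hxy
      have h2 : (⟨f x, ⟨x, rfl⟩⟩ : Set.range f) = ⟨f y, ⟨y, rfl⟩⟩ := Subtype.ext h1
      have h3 := congrArg (fun z => (Prod.snd z).1) hxy
      simp only at h3
      rw [h2] at h3
      exact Subtype.ext (by have := sub_left_injective h3; exact this)
    have := Cardinal.mk_le_of_injective hinj
    rwa [Cardinal.mk_prod, Cardinal.lift_id, Cardinal.lift_id] at this
  have bound : ∀ n : ℕ, #{x : B // p ^ n • x = 0} ≤ c := by
    intro n
    induction n with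
    | zero =>
        have hsub : Subsingleton {x : B // p ^ 0 • x = 0} := by
          constructor
          intro a b
          apply Subtype.ext
          have ha := a.2; have hb := b.2
          simp only [pow_zero, one_smul] at ha hb
          rw [ha, hb]
        have : #{x : B // p ^ 0 • x = 0} ≤ 1 := Cardinal.mk_le_one_iff_set_subsingleton.2
          (fun a ha b hb => by
            simp only [Set.mem_setOf_eq, pow_zero, one_smul] at ha hb; rw [ha, hb])
        exact this.trans (Cardinal.one_le_aleph0.trans hcω)
    | succ n ih =>
        calc #{x : B // p ^ (n + 1) • x = 0} ≤ #{x : B // p ^ n • x = 0} * k := step n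
          _ ≤ c * c := mul_le_mul' ih (le_max_left _ _)
          _ = c := Cardinal.mul_eq_self hcω
  have hU : (⋃ n : ULift.{u} ℕ, {x : B | p ^ n.down • x = 0}) = Set.univ := by
    ext x
    simp only [Set.mem_iUnion, Set.mem_univ, iff_true, Set.mem_setOf_eq]
    obtain ⟨n, hn⟩ := hpgroup x
    exact ⟨⟨n⟩, hn⟩
  have h1 : #B ≤ #(ULift.{u} ℕ) * ⨆ n : ULift.{u} ℕ, #{x : B | p ^ n.down • x = 0} := by
    rw [← Cardinal.mk_univ, ← hU]
    exact Cardinal.mk_iUnion_le _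
  have h2 : #B ≤ ℵ₀ * c := by
    refine h1.trans (mul_le_mul' (by simp) (ciSup_le' fun n => ?_))
    exact bound n.down
  have h3 : #B ≤ c := by
    rwa [Cardinal.aleph0_mul_eq hcω] at h2
  have hlt : ℵ₀ < (2 : Cardinal) ^ m :=
    (Cardinal.cantor ℵ₀).trans_le (Cardinal.power_le_power_left two_ne_zero hm)
  rcases le_or_gt k ℵ₀ with h | h
  · exfalso
    have : c = ℵ₀ := max_eq_right h
    rw [hB, this] at h3
    exact absurd h3 (not_le.2 hlt)
  · have : c = k := max_eq_left h.le
    rw [hB, this] at h3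
    exact le_antisymm (hB ▸ Cardinal.mk_subtype_le _) h3
end

section
/- Let A be an abelian group of infinite cardinality m. Then every subset X of the character group Hom(A, S^1) that separates points of A generates a subgroup of Hom(A, S^1) that also separates points; moreover, one can choose a point-separating subgroup H ≤ Hom(A, S^1) with |H| ≤ m. -/
open Cardinal

noncomputable def ratCircleToRealCircle : AddCircle (1 : ℚ) →+ AddCircle (1 : ℝ) :=
  QuotientAddGroup.lift _
    ((QuotientAddGroup.mk' (AddSubgroup.zmultiples (1 : ℝ))).comp
      (Rat.castHom ℝ).toAddMonoidHom) (by
    intro x hx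
    obtain ⟨n, rfl⟩ := AddSubgroup.mem_zmultiples_iff.mp hx
    simp only [AddMonoidHom.mem_ker, AddMonoidHom.comp_apply,
      RingHom.toAddMonoidHom_eq_coe, AddMonoidHom.coe_coe, QuotientAddGroup.mk'_apply]
    rw [QuotientAddGroup.eq_zero_iff]
    refine AddSubgroup.mem_zmultiples_iff.mpr ⟨n, ?_⟩
    simp)

lemma ratCircleToRealCircle_injective : Function.Injective ratCircleToRealCircle := by
  rw [injective_iff_map_eq_zero]
  intro x hx
  induction x using QuotientAddGroup.induction_on with
  | H q =>
    rw [show ratCircleToRealCircle ((q : ℚ ⧸ AddSubgroup.zmultiples (1:ℚ)))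
        = ((q : ℝ) : AddCircle (1 : ℝ)) from rfl, QuotientAddGroup.eq_zero_iff] at hx
    obtain ⟨n, hn⟩ := AddSubgroup.mem_zmultiples_iff.mp hx
    rw [QuotientAddGroup.eq_zero_iff]
    refine AddSubgroup.mem_zmultiples_iff.mpr ⟨n, ?_⟩
    have h2 : (n : ℝ) = (q : ℝ) := by rw [zsmul_one] at hn; exact hn
    have h3 : (n : ℚ) = q := by exact_mod_cast h2
    simpa using h3

lemma exists_char_ne_zero {A : Type u} [AddCommGroup A] {a : A} (ha : a ≠ 0) :
    ∃ h : A →+ AddCircle (1 : ℝ), h a ≠ 0 := by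
  obtain ⟨c, hc⟩ := CharacterModule.exists_character_apply_ne_zero_of_ne_zero ha
  refine ⟨ratCircleToRealCircle.comp (c : A →+ AddCircle (1 : ℚ)), ?_⟩
  intro h
  exact hc (ratCircleToRealCircle_injective (by rw [map_zero]; exact h))

lemma mk_closure_le {G : Type u} [AddCommGroup G] (s : Set G) [Nonempty s] :
    #(AddSubgroup.closure s) ≤ max #s ℵ₀ := by
  rw [← Submodule.span_int_eq_addSubgroupClosure]
  have hsurj : Function.Surjective
      (fun f : (s →₀ ℤ) => (⟨Finsupp.linearCombination ℤ (Subtype.val : s → G) f, by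
        have := Finsupp.range_linearCombination (R := ℤ) (v := (Subtype.val : s → G))
        rw [Subtype.range_coe] at this
        exact this ▸ LinearMap.mem_range_self _ f⟩ :
        (Submodule.span ℤ s).toAddSubgroup)) := by
    rintro ⟨x, hx⟩
    have : x ∈ Submodule.span ℤ s := hx
    rw [← Subtype.range_coe (s := s),
      ← Finsupp.range_linearCombination (R := ℤ)] at this
    obtain ⟨f, hf⟩ := this
    exact ⟨f, Subtype.ext hf⟩
  calc #(Submodule.span ℤ s).toAddSubgroup ≤ #(s →₀ ℤ) := Cardinal.mk_le_of_surjective hsurj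
    _ = max #s ℵ₀ := by simp

/-- For an abelian group `A` of infinite cardinality `m`: any point-separating set of
characters generates a point-separating subgroup, and there exists a point-separating
subgroup of characters of cardinality at most `m`. -/
theorem stmt_4 {A : Type u} [AddCommGroup A] (m : Cardinal.{u}) (hm : ℵ₀ ≤ m)
    (hA : #A = m) :
    (∀ X : Set (A →+ AddCircle (1 : ℝ)),
        (∀ v w : A, v ≠ w → ∃ h ∈ X, h v ≠ h w) →
        (∀ v w : A, v ≠ w → ∃ h ∈ AddSubgroup.closure X, h v ≠ h w)) ∧
    ∃ H : AddSubgroup (A →+ AddCircle (1 : ℝ)),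
      (∀ v w : A, v ≠ w → ∃ h ∈ H, h v ≠ h w) ∧ #H ≤ m := by
  constructor
  · intro X hX v w hvw
    obtain ⟨h, hhX, hh⟩ := hX v w hvw
    exact ⟨h, AddSubgroup.subset_closure hhX, hh⟩
  · have : Infinite A := by
      rw [Cardinal.infinite_iff, hA]; exact hm
    -- for each pair of distinct points choose a separating character
    have hchoice : ∀ p : {p : A × A // p.1 ≠ p.2},
        ∃ h : A →+ AddCircle (1 : ℝ), h p.1.1 ≠ h p.1.2 := by
      rintro ⟨⟨v, w⟩, hvw⟩
      obtain ⟨h, hh⟩ := exists_char_ne_zero (sub_ne_zero_of_ne hvw)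
      refine ⟨h, fun heq => hh ?_⟩
      rw [map_sub, heq, sub_self]
    choose c hc using hchoice
    have hne : Nonempty {p : A × A // p.1 ≠ p.2} := by
      obtain ⟨a, b, hab⟩ := exists_pair_ne A
      exact ⟨⟨(a, b), hab⟩⟩
    refine ⟨AddSubgroup.closure (Set.range c), ?_, ?_⟩
    · intro v w hvw
      exact ⟨c ⟨(v, w), hvw⟩, AddSubgroup.subset_closure ⟨_, rfl⟩, hc ⟨(v, w), hvw⟩⟩
    · have h1 : #(Set.range c) ≤ m := by
        refine (Cardinal.mk_range_le).trans ?_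
        calc #{p : A × A // p.1 ≠ p.2} ≤ #(A × A) := Cardinal.mk_subtype_le _
          _ = m := by rw [Cardinal.mk_prod, Cardinal.lift_id, hA,
              Cardinal.mul_eq_self hm]
      have : Nonempty (Set.range c) := Set.range_nonempty c |>.to_subtype
      exact (mk_closure_le _).trans (max_le h1 hm)
end

section
/- Let V be a vector space over F_p of infinite dimension m. Then every subspace H of the dual space V* that separates the points of V contains a point-separating subspace of dimension at most m. -/
open Cardinal

/-- If `V` is an `𝔽_p`-vector space of infinite dimension `m`, then every
point-separating subspace of the dual contains a point-separating subspace of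
dimension at most `m`. -/
theorem stmt_9 {V : Type u} (p : ℕ) [Fact p.Prime] [AddCommGroup V] [Module (ZMod p) V]
    (m : Cardinal.{u}) (hm : ℵ₀ ≤ m) (hdim : Module.rank (ZMod p) V = m)
    (H : Submodule (ZMod p) (Module.Dual (ZMod p) V))
    (hsep : ∀ v : V, v ≠ 0 → ∃ f ∈ H, f v ≠ 0) :
    ∃ Q : Submodule (ZMod p) (Module.Dual (ZMod p) V),
      Q ≤ H ∧ (∀ v : V, v ≠ 0 → ∃ f ∈ Q, f v ≠ 0) ∧ Module.rank (ZMod p) Q ≤ m := by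
  classical
  have hchoice : ∀ v : V, ∃ f : Module.Dual (ZMod p) V, f ∈ H ∧ (v ≠ 0 → f v ≠ 0) := by
    intro v
    by_cases hv : v = 0
    · exact ⟨0, H.zero_mem, fun h => absurd hv h⟩
    · obtain ⟨f, hfH, hfv⟩ := hsep v hv
      exact ⟨f, hfH, fun _ => hfv⟩
  choose f hfH hfv using hchoice
  have hVle : #V ≤ m := by
    obtain ⟨⟨ι, b⟩⟩ := (inferInstance : Module.Free (ZMod p) V)
    have hι : #ι = m := by rw [b.mk_eq_rank'', hdim]
    have : Infinite ι := by
      rw [Cardinal.infinite_iff, hι]; exact hm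
    have : #V = #(ι →₀ ZMod p) := Cardinal.mk_congr b.repr.toEquiv
    rw [this, mk_finsupp_lift_of_infinite, Cardinal.lift_uzero, hι]
    refine max_le le_rfl ?_
    exact le_trans (Cardinal.lift_le_aleph0.2 (Cardinal.lt_aleph0_of_finite _).le) hm
  refine ⟨Submodule.span (ZMod p) (Set.range f), ?_, ?_, ?_⟩
  · rw [Submodule.span_le]
    rintro _ ⟨v, rfl⟩
    exact hfH v
  · intro v hv
    exact ⟨f v, Submodule.subset_span ⟨v, rfl⟩, hfv v hv⟩
  · exact le_trans (rank_span_le _) (le_trans Cardinal.mk_range_le hVle)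
end

section
/- Let V be an F_p-vector space and H ⊆ V* a minimal point-separating subspace of infinite dimension k. Then there is a linear isomorphism i : ∏_k F_p → V such that the pullback i*(H) ⊆ (∏_k F_p)* equals the subspace spanned by the coordinate projections. -/
open Cardinal

set_option maxHeartbeats 1000000
set_option synthInstance.maxHeartbeats 400000

/-- If `H ⊆ V*` is a minimal point-separating subspace of infinite dimension `k = #ι`,
then there is a linear isomorphism `i : ∏_k 𝔽_p → V` under which the pullback of `H`
is the span of the coordinate projections. -/
theorem stmt_13 (p : ℕ) [Fact p.Prime] (V : Type u) [AddCommGroup V] [Module (ZMod p) V]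
    (H : Submodule (ZMod p) (Module.Dual (ZMod p) V))
    (hsep : ∀ v : V, v ≠ 0 → ∃ f ∈ H, f v ≠ 0)
    (hmin : ∀ H' : Submodule (ZMod p) (Module.Dual (ZMod p) V),
      H' < H → ¬ ∀ v : V, v ≠ 0 → ∃ f ∈ H', f v ≠ 0)
    (ι : Type u) [Infinite ι] (hk : Module.rank (ZMod p) H = #ι) :
    ∃ i : (ι → ZMod p) ≃ₗ[ZMod p] V,
      Submodule.map (i.toLinearMap.dualMap) H =
        Submodule.span (ZMod p)
          (Set.range fun j : ι => (LinearMap.proj j : (ι → ZMod p) →ₗ[ZMod p] ZMod p)) := by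
  classical
  -- the evaluation map `V → H*`
  let ev : V →ₗ[ZMod p] Module.Dual (ZMod p) H :=
    (H.subtype.dualMap).comp (Module.Dual.eval (ZMod p) V)
  have hev : ∀ (v : V) (f : H), ev v f = (f : Module.Dual (ZMod p) V) v := fun v f => rfl
  have hker : ∀ v : V, ev v = 0 → v = 0 := by
    intro v h
    by_contra hv
    obtain ⟨f, hf, hfv⟩ := hsep v hv
    have : ev v ⟨f, hf⟩ = 0 := by rw [h]; rfl
    exact hfv this
  have hinj : Function.Injective ev := by
    intro a b hab
    have : a - b = 0 := hker _ (by rw [map_sub, hab, sub_self])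
    exact sub_eq_zero.mp this
  have hsurj : Function.Surjective ev := by
    intro ψ
    by_cases hψ : ψ = 0
    · exact ⟨0, by rw [map_zero, hψ]⟩
    obtain ⟨e₀, he₀⟩ : ∃ e₀ : H, ψ e₀ ≠ 0 := by
      by_contra h; push_neg at h; exact hψ (LinearMap.ext h)
    have hH'le : Submodule.map H.subtype (LinearMap.ker ψ) ≤ H := by
      rintro x ⟨g, _, rfl⟩; exact g.2
    have hH'lt : Submodule.map H.subtype (LinearMap.ker ψ) < H := lt_of_le_of_ne hH'le (by
      intro h
      have hmem : (e₀ : Module.Dual (ZMod p) V) ∈ Submodule.map H.subtype (LinearMap.ker ψ) := by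
        rw [h]; exact e₀.2
      obtain ⟨g, hg, hge⟩ := hmem
      have hge' : g = e₀ := Subtype.ext hge
      exact he₀ (hge' ▸ hg))
    have hmin' := hmin _ hH'lt
    push_neg at hmin'
    obtain ⟨v, hv, hv0⟩ := hmin'
    have key : ev v = ((e₀ : Module.Dual (ZMod p) V) v * (ψ e₀)⁻¹) • ψ := by
      ext g
      have hg' : (g - ψ g • (ψ e₀)⁻¹ • e₀ : H) ∈ LinearMap.ker ψ := by
        rw [LinearMap.mem_ker, map_sub ψ, map_smul ψ, map_smul ψ, smul_eq_mul, smul_eq_mul,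
          inv_mul_cancel₀ he₀, mul_one, sub_self]
      have hz := hv0 _ ⟨_, hg', rfl⟩
      rw [map_sub H.subtype, map_smul H.subtype, map_smul H.subtype, LinearMap.sub_apply,
        LinearMap.smul_apply, LinearMap.smul_apply, smul_eq_mul, smul_eq_mul] at hz
      simp only [Submodule.coe_subtype] at hz
      rw [hev, LinearMap.smul_apply, smul_eq_mul]
      linear_combination hz
    have hcne : (e₀ : Module.Dual (ZMod p) V) v * (ψ e₀)⁻¹ ≠ 0 := by
      intro h0
      obtain ⟨f, hf, hfv⟩ := hsep v hv
      have : ev v ⟨f, hf⟩ = 0 := by rw [key, h0, zero_smul]; rfl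
      exact hfv this
    exact ⟨((e₀ : Module.Dual (ZMod p) V) v * (ψ e₀)⁻¹)⁻¹ • v,
      by rw [map_smul, key, smul_smul, inv_mul_cancel₀ hcne, one_smul]⟩
  let E : V ≃ₗ[ZMod p] Module.Dual (ZMod p) H := LinearEquiv.ofBijective ev ⟨hinj, hsurj⟩
  -- a basis of `H` indexed by `ι`
  have hκ : #(Module.Free.ChooseBasisIndex (ZMod p) H) = #ι := by
    rw [← hk, ← Module.Free.rank_eq_card_chooseBasisIndex]
  obtain ⟨eκ⟩ := Cardinal.eq.mp hκ
  let b : Module.Basis ι (ZMod p) H := (Module.Free.chooseBasis (ZMod p) H).reindex eκ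
  -- `(ι → ZMod p)` is the dual of `ι →₀ ZMod p`
  let d : (ι → ZMod p) ≃ₗ[ZMod p] Module.Dual (ZMod p) (ι →₀ ZMod p) :=
    (LinearEquiv.piCongrRight fun _ : ι =>
      (LinearMap.ringLmapEquivSelf (ZMod p) (ZMod p) (ZMod p)).symm).trans
      (Finsupp.lsum (ZMod p))
  let i : (ι → ZMod p) ≃ₗ[ZMod p] V := (d.trans b.repr.dualMap).trans E.symm
  refine ⟨i, ?_⟩
  have h1 : ∀ (x : Module.Dual (ZMod p) H) (f : H),
      (f : Module.Dual (ZMod p) V) (E.symm x) = x f := by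
    intro x f
    have hEx : ev (E.symm x) = x := by
      have h := E.apply_symm_apply x
      exact h
    calc (f : Module.Dual (ZMod p) V) (E.symm x) = ev (E.symm x) f := rfl
      _ = x f := by rw [hEx]
  have hHspan : H = Submodule.span (ZMod p)
      (Set.range fun j : ι => (b j : Module.Dual (ZMod p) V)) := by
    conv_lhs => rw [← Submodule.map_subtype_top H, ← b.span_eq, Submodule.map_span,
      ← Set.range_comp]
    rfl
  have hfun : ∀ j : ι, i.toLinearMap.dualMap ((b j : Module.Dual (ZMod p) V)) =
      (LinearMap.proj j : (ι → ZMod p) →ₗ[ZMod p] ZMod p) := by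
    intro j
    ext g
    rw [LinearMap.dualMap_apply]
    rw [show i.toLinearMap g = E.symm (b.repr.dualMap (d g)) from rfl]
    rw [h1, LinearEquiv.dualMap_apply, Module.Basis.repr_self]
    show (d g) (Finsupp.single j 1) = g j
    simp [d, Finsupp.lsum_single]
  rw [hHspan, Submodule.map_span, ← Set.range_comp]
  have hcomp : (⇑(i.toLinearMap.dualMap) ∘ fun j : ι => ((b j : Module.Dual (ZMod p) V))) =
      (fun j : ι => (LinearMap.proj j : (ι → ZMod p) →ₗ[ZMod p] ZMod p)) := funext hfun
  rw [hcomp]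
end

section
/- Let G be a Hausdorff topological abelian group which is an F_p-vector space (p·g = 0 for all g), and let H ⊆ G be an open compact subgroup. Then G is topologically isomorphic to H × (G/H), where G/H carries the discrete topology. -/
set_option maxSynthPendingDepth 3

/-- Auxiliary: in an abelian group of prime exponent `p`, the projection onto any
quotient by a subgroup admits an additive section. -/
theorem stmt_16_aux (p : ℕ) (hp : p.Prime) (G : Type u) [AddCommGroup G]
    (hexp : ∀ g : G, p • g = 0) (H : AddSubgroup G) :
    ∃ q : (G ⧸ H) → G, (∀ x, QuotientAddGroup.mk' H (q x) = x) ∧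
      ∀ a b, q (a + b) = q a + q b := by
  haveI : Fact p.Prime := ⟨hp⟩
  haveI : NeZero p := ⟨hp.ne_zero⟩
  haveI : Module (ZMod p) G := AddCommGroup.zmodModule hexp
  haveI : Module (ZMod p) (G ⧸ H) :=
    QuotientAddGroup.zmodModule (fun x => by rw [hexp x]; exact H.zero_mem)
  haveI : Module.Free (ZMod p) (G ⧸ H) := Module.Free.of_basis (Module.Basis.ofVectorSpace (ZMod p) (G ⧸ H))
  haveI : Module.Projective (ZMod p) (G ⧸ H) := by infer_instance
  let F : G →ₗ[ZMod p] (G ⧸ H) := (QuotientAddGroup.mk' H).toZModLinearMap p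
  have hFsurj : LinearMap.range F = ⊤ := by
    rw [LinearMap.range_eq_top]
    exact fun x => QuotientAddGroup.mk'_surjective H x
  obtain ⟨q, hq⟩ := LinearMap.exists_rightInverse_of_surjective
    (R := ZMod p) (M := G) (P := G ⧸ H) F hFsurj
  exact ⟨q, fun x => congrArg (fun f : (G ⧸ H) →ₗ[ZMod p] (G ⧸ H) => f x) hq,
    fun a b => q.map_add a b⟩

/-- If `G` is a Hausdorff topological abelian group of exponent a prime `p` and
`H ⊆ G` is a compact open subgroup, then `G` is topologically isomorphic to
`H × (G / H)` (with `G / H` carrying the quotient, hence discrete, topology). -/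
theorem stmt_16 (p : ℕ) (hp : p.Prime) (G : Type u) [AddCommGroup G]
    [TopologicalSpace G] [IsTopologicalAddGroup G] [T2Space G]
    (hexp : ∀ g : G, p • g = 0)
    (H : AddSubgroup G) (hopen : IsOpen (H : Set G)) (hcomp : IsCompact (H : Set G)) :
    ∃ e : G ≃+ (H × (G ⧸ H)), Continuous e ∧ Continuous e.symm := by
  haveI : DiscreteTopology (G ⧸ H) := QuotientAddGroup.discreteTopology hopen
  obtain ⟨q, hq', hqadd⟩ := stmt_16_aux p hp G hexp H
  have hmem : ∀ g : G, g - q (QuotientAddGroup.mk' H g) ∈ H := by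
    intro g
    rw [← QuotientAddGroup.eq_zero_iff]
    show QuotientAddGroup.mk' H (g - q (QuotientAddGroup.mk' H g)) = 0
    rw [map_sub, hq', sub_self]
  refine ⟨{ toFun := fun g => (⟨g - q (QuotientAddGroup.mk' H g), hmem g⟩,
              QuotientAddGroup.mk' H g)
            invFun := fun x => (x.1 : G) + q x.2
            left_inv := fun g => by simp
            right_inv := fun x => by
              have hx1 : ((x.1 : G) : G ⧸ H) = 0 :=
                (QuotientAddGroup.eq_zero_iff _).2 x.1.2
              have h2 : QuotientAddGroup.mk' H ((x.1 : G) + q x.2) = x.2 := by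
                rw [map_add, hq', QuotientAddGroup.mk'_apply, hx1, zero_add]
              refine Prod.ext (Subtype.ext ?_) h2
              show ((x.1 : G) + q x.2) -
                  q (QuotientAddGroup.mk' H ((x.1 : G) + q x.2)) = (x.1 : G)
              rw [h2]; exact add_sub_cancel_right _ _
            map_add' := fun a b => by
              refine Prod.ext (Subtype.ext ?_) (map_add _ a b)
              show (a + b) - q (QuotientAddGroup.mk' H (a + b)) =
                (a - q (QuotientAddGroup.mk' H a)) + (b - q (QuotientAddGroup.mk' H b))
              rw [map_add, hqadd]
              abel },
          ?_, ?_⟩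
  · refine Continuous.prodMk (Continuous.subtype_mk ?_ _) continuous_quotient_mk'
    exact continuous_id.sub ((continuous_of_discreteTopology (α := G ⧸ H)).comp
      continuous_quotient_mk')
  · exact (continuous_subtype_val.comp continuous_fst).add
      ((continuous_of_discreteTopology (α := G ⧸ H)).comp continuous_snd)
end

section
/- The abelian group ⊕_{ℵ₁} Z/pZ admits a compact Hausdorff group topology if and only if ℵ₁ = 2^ℵ₀ (the continuum hypothesis). -/
open Cardinal Set Topology Filter

section CantorScheme

variable {X : Type*} [TopologicalSpace X] [T25Space X] [PerfectSpace X] [Nonempty X]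

noncomputable def sch : List Bool → {C : Set X // Perfect C ∧ C.Nonempty}
  | [] => ⟨Set.univ, PerfectSpace.univ_perfect (α := X), Set.univ_nonempty⟩
  | (b :: s) =>
    let h := (sch s).2.1.splitting (sch s).2.2
    cond b
      ⟨h.choose_spec.choose, h.choose_spec.choose_spec.2.1.1, h.choose_spec.choose_spec.2.1.2.1⟩
      ⟨h.choose, h.choose_spec.choose_spec.1.1, h.choose_spec.choose_spec.1.2.1⟩

lemma sch_sub (b : Bool) (s : List Bool) : (sch (b :: s)).1 ⊆ (sch (X := X) s).1 := by
  cases b <;> simp only [sch, cond]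
  · exact ((sch s).2.1.splitting (sch s).2.2).choose_spec.choose_spec.1.2.2
  · exact ((sch s).2.1.splitting (sch s).2.2).choose_spec.choose_spec.2.1.2.2

lemma sch_disj (s : List Bool) :
    Disjoint (sch (X := X) (false :: s)).1 (sch (X := X) (true :: s)).1 := by
  simp only [sch, cond]
  exact ((sch s).2.1.splitting (sch s).2.2).choose_spec.choose_spec.2.2

end CantorScheme

def pre (x : ℕ → Bool) : ℕ → List Bool
  | 0 => []
  | (n + 1) => x n :: pre x n

lemma pre_eq {x y : ℕ → Bool} : ∀ {m : ℕ}, (∀ k < m, x k = y k) → pre x m = pre y m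
  | 0, _ => rfl
  | (m + 1), h => by
    simp only [pre, h m (Nat.lt_succ_self m), pre_eq fun k hk => h k (hk.trans (Nat.lt_succ_self m))]

theorem continuum_le_of_compact {X : Type} [TopologicalSpace X] [T2Space X] [CompactSpace X]
    [PerfectSpace X] [Nonempty X] : (2 : Cardinal) ^ (ℵ₀ : Cardinal) ≤ #X := by
  have hne : ∀ x : ℕ → Bool, (⋂ n, (sch (X := X) (pre x n)).1).Nonempty := by
    intro x
    apply IsCompact.nonempty_iInter_of_sequence_nonempty_isCompact_isClosed
      (fun n => (sch (X := X) (pre x n)).1)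
    · intro n; exact sch_sub _ _
    · intro n; exact (sch _).2.2
    · exact ((sch _).2.1.closed).isCompact
    · intro n; exact (sch _).2.1.closed
  choose g hg using hne
  have hginj : Function.Injective g := by
    intro x y hxy
    by_contra hne'
    have hex : ∃ n, x n ≠ y n := by
      by_contra h
      push_neg at h
      exact hne' (funext h)
    set n := Nat.find hex with hn
    have hxn : x n ≠ y n := Nat.find_spec hex
    have hpre : pre x n = pre y n :=
      pre_eq fun k hk => by simpa using Nat.find_min hex hk
    have hx : g x ∈ (sch (X := X) (x n :: pre x n)).1 := by
      have := hg x; exact Set.mem_iInter.1 this (n + 1)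
    have hy : g y ∈ (sch (X := X) (y n :: pre x n)).1 := by
      have := Set.mem_iInter.1 (hg y) (n + 1)
      rwa [show pre y (n+1) = y n :: pre x n by rw [pre, hpre]] at this
    rw [hxy] at hx
    have hd : Disjoint (sch (X := X) (x n :: pre x n)).1 (sch (X := X) (y n :: pre x n)).1 := by
      rcases Bool.eq_false_or_eq_true (x n) with h1 | h1 <;>
        rcases Bool.eq_false_or_eq_true (y n) with h2 | h2 <;> rw [h1, h2] <;>
        first
          | exact absurd (h1.trans h2.symm) hxn
          | exact sch_disj _
          | exact (sch_disj _).symm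
    exact (Set.disjoint_left.1 hd) hx hy
  calc (2 : Cardinal) ^ (ℵ₀ : Cardinal) = #(ℕ → Bool) := by
        rw [Cardinal.mk_arrow]; simp
    _ ≤ #X := Cardinal.mk_le_of_injective hginj

theorem perfectSpace_of_addGroup {G : Type*} [TopologicalSpace G] [AddGroup G]
    [IsTopologicalAddGroup G] [CompactSpace G] [Infinite G] : PerfectSpace G := by
  constructor
  intro x _
  rw [AccPt]
  rw [Filter.principal_univ, inf_top_eq]
  by_contra h
  rw [Filter.not_neBot] at h
  have hx : IsOpen ({x} : Set G) := (isOpen_singleton_iff_punctured_nhds x).2 h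
  have h0 : IsOpen ({0} : Set G) := by
    have : ({0} : Set G) = (Homeomorph.addLeft (-x)) '' {x} := by simp
    rw [this]
    exact (Homeomorph.addLeft (-x)).isOpenMap _ hx
  haveI : DiscreteTopology G := discreteTopology_iff_isOpen_singleton_zero.2 h0
  haveI : Finite G := finite_of_compact_of_discrete
  exact absurd ‹Finite G› (Infinite.not_finite ·)

theorem rank_eq_mk_of_finite_field {K V : Type} [Field K] [Finite K] [AddCommGroup V]
    [Module K V] [Infinite V] : Module.rank K V = #V := by
  let b := Module.Basis.ofVectorSpace K V
  have hMV : #V = #(Module.Basis.ofVectorSpaceIndex K V →₀ K) := Cardinal.mk_congr b.repr.toEquiv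
  haveI : Infinite (Module.Basis.ofVectorSpaceIndex K V) := by
    rw [Cardinal.infinite_iff]
    by_contra h
    rw [not_le] at h
    have : #(Module.Basis.ofVectorSpaceIndex K V →₀ K) < ℵ₀ := by
      have hfin : #(Module.Basis.ofVectorSpaceIndex K V →₀ K) ≤
          #(Module.Basis.ofVectorSpaceIndex K V → K) := Cardinal.mk_le_of_injective
        (DFunLike.coe_injective (F := Module.Basis.ofVectorSpaceIndex K V →₀ K))
      refine hfin.trans_lt ?_
      rw [Cardinal.mk_arrow]
      exact Cardinal.power_lt_aleph0 (by simpa using Cardinal.lt_aleph0_of_finite K)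
        (by simpa using h)
    rw [← hMV] at this
    exact this.not_ge (Cardinal.infinite_iff.1 ‹Infinite V›)
  rw [← b.mk_eq_rank'', hMV, Cardinal.mk_finsupp_of_infinite]
  exact (max_eq_left ((Cardinal.lt_aleph0_of_finite K).le.trans (Cardinal.aleph0_le_mk _))).symm

universe u in
theorem aleph_one_univ_iff :
    Cardinal.aleph.{u} 1 = 2 ^ ℵ₀ ↔ Cardinal.aleph.{0} 1 = 2 ^ ℵ₀ := by
  have h2 : Cardinal.lift.{u} (Cardinal.aleph.{0} 1) = Cardinal.aleph.{u} 1 := by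
    rw [Cardinal.lift_aleph, Ordinal.lift_one]
  have h3 : Cardinal.lift.{u} ((2 : Cardinal.{0}) ^ (ℵ₀ : Cardinal.{0}))
      = (2 : Cardinal.{u}) ^ (ℵ₀ : Cardinal.{u}) := by
    rw [Cardinal.lift_two_power, Cardinal.lift_aleph0]
  constructor
  · intro h
    exact Cardinal.lift_injective (by rw [h2, h3, h])
  · intro h
    rw [← h2, h, h3]

/-- `⊕_{ℵ₁} ℤ/pℤ` admits a compact Hausdorff group topology if and only if the
continuum hypothesis `ℵ₁ = 2 ^ ℵ₀` holds. -/
theorem stmt_18 (p : ℕ) (hp : p.Prime) (ι : Type) (hι : #ι = Cardinal.aleph 1) :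
    (∃ t : TopologicalSpace (ι →₀ ZMod p),
        @IsTopologicalAddGroup (ι →₀ ZMod p) t _ ∧ @T2Space (ι →₀ ZMod p) t ∧
          @CompactSpace (ι →₀ ZMod p) t) ↔
      Cardinal.aleph 1 = (2 : Cardinal) ^ Cardinal.aleph0 := by
  haveI : Fact p.Prime := ⟨hp⟩
  haveI : NeZero p := ⟨hp.ne_zero⟩
  haveI : Infinite ι := by
    rw [Cardinal.infinite_iff, hι]; exact aleph0_le_aleph 1
  have hcard : #(ι →₀ ZMod p) = Cardinal.aleph 1 := by
    rw [Cardinal.mk_finsupp_of_infinite, hι]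
    exact max_eq_left ((Cardinal.lt_aleph0_of_finite _).le.trans (aleph0_le_aleph 1))
  constructor
  · rintro ⟨t, htg, ht2, hc⟩
    letI := t; haveI := htg; haveI := ht2; haveI := hc
    haveI : Infinite (ι →₀ ZMod p) := by
      rw [Cardinal.infinite_iff, hcard]; exact aleph0_le_aleph 1
    haveI : PerfectSpace (ι →₀ ZMod p) := perfectSpace_of_addGroup
    have h1 := continuum_le_of_compact (X := ι →₀ ZMod p)
    rw [hcard] at h1
    rw [aleph_one_univ_iff]
    refine le_antisymm ?_ h1
    rw [two_power_aleph0]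
    exact aleph_one_le_continuum
  · intro hCH
    rw [aleph_one_univ_iff] at hCH
    letI : TopologicalSpace (ZMod p) := ⊥
    haveI : DiscreteTopology (ZMod p) := ⟨rfl⟩
    have hV : #(ℕ → ZMod p) = (2 : Cardinal) ^ (ℵ₀ : Cardinal) := by
      rw [Cardinal.mk_arrow, Cardinal.mk_fintype, ZMod.card]
      simp only [Cardinal.lift_natCast, Cardinal.mk_denumerable, Cardinal.lift_aleph0]
      exact Cardinal.nat_power_eq le_rfl hp.two_le
    haveI : Infinite (ℕ → ZMod p) := by
      rw [Cardinal.infinite_iff, hV, two_power_aleph0]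
      exact aleph0_le_continuum
    have hrank : Module.rank (ZMod p) (ι →₀ ZMod p) = Module.rank (ZMod p) (ℕ → ZMod p) := by
      rw [rank_finsupp_self', rank_eq_mk_of_finite_field, hV, hι, hCH]
    obtain ⟨e⟩ := nonempty_linearEquiv_of_rank_eq hrank
    letI t : TopologicalSpace (ι →₀ ZMod p) := TopologicalSpace.induced e inferInstance
    have he : Topology.IsInducing (e : (ι →₀ ZMod p) → (ℕ → ZMod p)) := ⟨rfl⟩
    have hhe : (ι →₀ ZMod p) ≃ₜ (ℕ → ZMod p) := e.toEquiv.toHomeomorphOfIsInducing he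
    refine ⟨t, ?_, ?_, ?_⟩
    · exact Topology.IsInducing.topologicalAddGroup e.toLinearMap.toAddMonoidHom he
    · exact hhe.symm.t2Space
    · exact hhe.symm.compactSpace
end

section
/- For infinite cardinals, the topological groups F_{k,n} = (∏_k Z/pZ) × (⊕_n Z/pZ) (product topology on the first factor, discrete on the second) have cardinality max(2^k, n) and weight max(k, n); in particular, for distinct pairs (k, n) of cardinals (with at least one infinite and finite values only 0), the spaces F_{k,n} are pairwise non-homeomorphic. -/
open Cardinal

/-- The weight of a topological space: the least cardinality of a topological basis. -/
noncomputable def tweight (X : Type u) [TopologicalSpace X] : Cardinal.{u} :=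
  sInf {c | ∃ B : Set (Set X), TopologicalSpace.IsTopologicalBasis B ∧ #B = c}

universe u

open Cardinal Set TopologicalSpace Topology

section Basics

variable {X Y : Type u} [TopologicalSpace X] [TopologicalSpace Y]

lemma tweight_le_basis {B : Set (Set X)} (hB : IsTopologicalBasis B) : tweight X ≤ #B :=
  csInf_le (OrderBot.bddBelow _) ⟨B, hB, rfl⟩

lemma exists_tweight_basis (X : Type u) [TopologicalSpace X] :
    ∃ B : Set (Set X), IsTopologicalBasis B ∧ #B = tweight X :=
by
  have h : {c : Cardinal.{u} | ∃ B : Set (Set X), IsTopologicalBasis B ∧ #B = c}.Nonempty :=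
    ⟨_, {U : Set X | IsOpen U}, isTopologicalBasis_opens, rfl⟩
  exact csInf_mem h

lemma tweight_le_of_inducing {f : X → Y} (hf : IsInducing f) : tweight X ≤ tweight Y := by
  obtain ⟨B, hB, hc⟩ := exists_tweight_basis Y
  exact (tweight_le_basis (hB.isInducing hf)).trans (mk_image_le.trans_eq hc)

lemma Homeomorph.tweight_eq (e : X ≃ₜ Y) : tweight X = tweight Y :=
  le_antisymm (tweight_le_of_inducing e.isInducing) (tweight_le_of_inducing e.symm.isInducing)

lemma tweight_discrete [DiscreteTopology X] : tweight X = #X := by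
  apply le_antisymm
  · refine (tweight_le_basis (isTopologicalBasis_singletons X)).trans ?_
    have : {s : Set X | ∃ x : X, s = {x}} = Set.range (fun x : X => ({x} : Set X)) := by
      ext s; simp [eq_comm, Set.range]
    rw [this]
    exact mk_range_le
  · obtain ⟨B, hB, hc⟩ := exists_tweight_basis X
    rw [← hc]
    have h : ∀ x : X, ({x} : Set X) ∈ B := by
      intro x
      obtain ⟨v, hvB, hxv, hsub⟩ :=
        hB.exists_subset_of_mem_open (Set.mem_singleton x) (isOpen_discrete {x})
      have : v = {x} := subset_antisymm hsub (Set.singleton_subset_iff.2 hxv)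
      exact this ▸ hvB
    refine mk_le_of_injective (f := fun x : X => (⟨{x}, h x⟩ : B)) ?_
    intro a b hab
    have : ({a} : Set X) = {b} := congrArg Subtype.val hab
    simpa using this

lemma tweight_le_of_finite [Finite X] : tweight X ≤ ℵ₀ := by
  refine (tweight_le_basis (isTopologicalBasis_opens (α := X))).trans ?_
  exact (lt_aleph0_of_finite _).le

lemma tweight_prod_le : tweight (X × Y) ≤ tweight X * tweight Y := by
  obtain ⟨B₁, h₁, c₁⟩ := exists_tweight_basis X
  obtain ⟨B₂, h₂, c₂⟩ := exists_tweight_basis Y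
  exact (tweight_le_basis (h₁.prod h₂)).trans (mk_image2_le.trans_eq (by rw [c₁, c₂]))

lemma le_tweight_of_disjoint_opens {ι : Type u} (U : ι → Set X) (ho : ∀ i, IsOpen (U i))
    (hne : ∀ i, (U i).Nonempty)
    (hd : ∀ i j, i ≠ j → ∀ x, x ∈ U i → x ∈ U j → False) : #ι ≤ tweight X := by
  obtain ⟨B, hB, hc⟩ := exists_tweight_basis X
  rw [← hc]
  have h : ∀ i : ι, ∃ b, b ∈ B ∧ b.Nonempty ∧ b ⊆ U i := by
    intro i
    obtain ⟨v, hvB, hvne, hsub⟩ := hB.exists_nonempty_subset (hne i) (ho i)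
    exact ⟨v, hvB, hvne, hsub⟩
  choose b hbB hbne hbsub using h
  refine mk_le_of_injective (f := fun i : ι => (⟨b i, hbB i⟩ : B)) ?_
  intro i j hij
  by_contra hne'
  obtain ⟨x, hx⟩ := hbne i
  have hbij : b i = b j := congrArg Subtype.val hij
  exact hd i j hne' x (hbsub i hx) (hbsub j (hbij ▸ hx))

end Basics

section Pi

open Cardinal Set TopologicalSpace Topology

lemma tweight_pi_le (K α : Type u) [TopologicalSpace α] [Finite α] :
    tweight (K → α) ≤ max #K ℵ₀ := by
  rcases finite_or_infinite K with h | h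
  · exact tweight_le_of_finite.trans (le_max_right _ _)
  · classical
    have hb := isTopologicalBasis_pi (ι := K) (X := fun _ => α)
      (fun _ => isTopologicalBasis_opens)
    refine (tweight_le_basis hb).trans ?_
    set g : (Σ F : Finset K, ({ i : K // i ∈ F } → Set α)) → Set (K → α) :=
      fun x => (x.1 : Set K).pi (fun i => if h : i ∈ x.1 then x.2 ⟨i, h⟩ else Set.univ) with hg
    have hsub : {S : Set (K → α) | ∃ (U : K → Set α) (F : Finset K),
        (∀ i, i ∈ F → U i ∈ {V : Set α | IsOpen V}) ∧ S = (F : Set K).pi U} ⊆ Set.range g := by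
      rintro S ⟨U, F, hU, rfl⟩
      refine ⟨⟨F, fun j => U j.1⟩, ?_⟩
      show (F : Set K).pi (fun i => if h : i ∈ F then U i else Set.univ) = (F : Set K).pi U
      refine Set.pi_congr rfl fun i hi => ?_
      rw [dif_pos (Finset.mem_coe.1 hi)]
    refine (mk_le_mk_of_subset hsub).trans (mk_range_le.trans ?_)
    rw [mk_sigma]
    calc (Cardinal.sum fun F : Finset K => #({ i : K // i ∈ F } → Set α))
        ≤ Cardinal.sum fun _ : Finset K => ℵ₀ :=
          Cardinal.sum_le_sum _ _ fun F => (lt_aleph0_of_finite _).le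
      _ = #(Finset K) * ℵ₀ := Cardinal.sum_const' _ _
      _ = #K * ℵ₀ := by rw [mk_finset_of_infinite]
      _ = #K := by
          rw [Cardinal.mul_eq_max (aleph0_le_mk K) le_rfl, max_eq_left (aleph0_le_mk K)]
      _ ≤ max #K ℵ₀ := le_max_left _ _

lemma finite_support_of_isOpen {K α : Type u} [TopologicalSpace α] {a₀ a₁ : α} (hne : a₁ ≠ a₀)
    {V : Set (K → α)} (hV : IsOpen V) (hVne : V.Nonempty) :
    {i : K | ∀ x ∈ V, x i = a₀}.Finite := by
  classical
  obtain ⟨f, hf⟩ := hVne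
  obtain ⟨I, u, hu, hsub⟩ := isOpen_pi_iff.1 hV f hf
  refine I.finite_toSet.subset fun i hi => ?_
  by_contra hiI
  have hmem : Function.update f i a₁ ∈ (I : Set K).pi u := by
    intro j hj
    rw [Function.update_of_ne (fun h : j = i => hiI (h ▸ hj))]
    exact (hu j hj).2
  have h := hi (Function.update f i a₁) (hsub hmem)
  rw [Function.update_self] at h
  exact hne h

lemma mk_le_tweight_pi (K α : Type u) [Infinite K] [TopologicalSpace α] [DiscreteTopology α]
    [Nontrivial α] : #K ≤ tweight (K → α) := by
  obtain ⟨a₀, a₁, hne⟩ := exists_pair_ne α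
  obtain ⟨B, hB, hc⟩ := exists_tweight_basis (K → α)
  rw [← hc]
  have h : ∀ i : K, ∃ b, b ∈ B ∧ (fun _ => a₀) ∈ b ∧ b ⊆ {x : K → α | x i = a₀} := by
    intro i
    have hopen : IsOpen {x : K → α | x i = a₀} := by
      exact (isOpen_discrete ({a₀} : Set α)).preimage (continuous_apply (A := fun _ : K => α) i)
    obtain ⟨b, hbB, hmem, hsub⟩ := hB.exists_subset_of_mem_open
      (show (fun _ => a₀) ∈ {x : K → α | x i = a₀} from rfl) hopen
    exact ⟨b, hbB, hmem, hsub⟩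
  choose b hbB hbm hbsub using h
  have hfib : ∀ s : Set (K → α), {i : K | b i = s}.Finite := by
    intro s
    rcases Set.eq_empty_or_nonempty {i : K | b i = s} with hE | ⟨i₀, hi₀⟩
    · rw [hE]; exact Set.finite_empty
    · have hbi₀ : b i₀ = s := hi₀
      have hso : IsOpen s := hbi₀ ▸ hB.isOpen (hbB i₀)
      have hsne : s.Nonempty := ⟨fun _ => a₀, hbi₀ ▸ hbm i₀⟩
      refine (finite_support_of_isOpen hne.symm hso hsne).subset ?_
      intro i hi x hx
      have hbi : b i = s := hi
      exact hbsub i (by rw [hbi]; exact hx)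
  set φ : K → B := fun i => ⟨b i, hbB i⟩ with hφ
  rcases finite_or_infinite (↥B) with hBf | hBi
  · exfalso
    have huniv : (Set.univ : Set K) = ⋃ s : B, {i : K | b i = ↑s} := by
      ext i
      simp only [Set.mem_univ, true_iff, Set.mem_iUnion]
      exact ⟨⟨b i, hbB i⟩, rfl⟩
    have : (Set.univ : Set K).Finite := by
      rw [huniv]; exact Set.finite_iUnion fun s => hfib ↑s
    exact Set.infinite_univ this
  · have hK : #K = #(Σ s : B, {i : K // φ i = s}) :=
      mk_congr (Equiv.sigmaFiberEquiv φ).symm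
    rw [hK, mk_sigma]
    calc (Cardinal.sum fun s : B => #{i : K // φ i = s})
        ≤ Cardinal.sum fun _ : B => ℵ₀ := by
          refine Cardinal.sum_le_sum _ _ fun s => ?_
          have hf : {i : K | φ i = s}.Finite :=
            (hfib ↑s).subset fun i hi => congrArg Subtype.val hi
          haveI : Finite {i : K // φ i = s} := hf.to_subtype
          exact (lt_aleph0_of_finite _).le
      _ = #B * ℵ₀ := Cardinal.sum_const' _ _
      _ = #B := by
          rw [Cardinal.mul_eq_max (aleph0_le_mk _) le_rfl, max_eq_left (aleph0_le_mk _)]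

end Pi

section Invariants

open Cardinal Set TopologicalSpace Topology

/-- Minimal cardinality of a cover by compact sets. -/
noncomputable def kcov (X : Type u) [TopologicalSpace X] : Cardinal.{u} :=
  sInf {c | ∃ S : Set (Set X), (∀ s ∈ S, IsCompact s) ∧ ⋃₀ S = Set.univ ∧ #S = c}

/-- Supremum of weights of compact subspaces. -/
noncomputable def cw (X : Type u) [TopologicalSpace X] : Cardinal.{u} :=
  ⨆ C : {s : Set X // IsCompact s}, tweight C

variable {X Y : Type u} [TopologicalSpace X] [TopologicalSpace Y]

lemma kcov_candidates_nonempty (X : Type u) [TopologicalSpace X] :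
    {c : Cardinal.{u} | ∃ S : Set (Set X),
      (∀ s ∈ S, IsCompact s) ∧ ⋃₀ S = Set.univ ∧ #S = c}.Nonempty := by
  refine ⟨_, {s : Set X | ∃ x : X, s = {x}}, ?_, ?_, rfl⟩
  · rintro s ⟨x, rfl⟩; exact isCompact_singleton
  · ext x
    simp only [Set.mem_sUnion, Set.mem_univ, iff_true, Set.mem_setOf_eq]
    exact ⟨{x}, ⟨x, rfl⟩, rfl⟩

lemma homeo_kcov_le (e : X ≃ₜ Y) : kcov Y ≤ kcov X := by
  unfold kcov
  obtain ⟨S, hSc, hScov, hSk⟩ := csInf_mem (kcov_candidates_nonempty X)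
  have hmem : #↥((Set.image ⇑e) '' S) ∈ {c : Cardinal | ∃ S' : Set (Set Y),
      (∀ s ∈ S', IsCompact s) ∧ ⋃₀ S' = Set.univ ∧ #S' = c} := by
    refine ⟨(Set.image ⇑e) '' S, ?_, ?_, rfl⟩
    · rintro s ⟨t, htS, rfl⟩; exact (hSc t htS).image e.continuous
    · rw [Set.sUnion_image]
      ext y
      simp only [Set.mem_iUnion, Set.mem_univ, iff_true]
      have hy : e.symm y ∈ ⋃₀ S := by rw [hScov]; trivial
      obtain ⟨s, hsS, hmem⟩ := hy
      exact ⟨s, hsS, e.symm y, hmem, e.apply_symm_apply y⟩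
  exact (csInf_le (OrderBot.bddBelow _) hmem).trans (mk_image_le.trans_eq hSk)

lemma homeo_kcov_eq (e : X ≃ₜ Y) : kcov X = kcov Y :=
  le_antisymm (homeo_kcov_le e.symm) (homeo_kcov_le e)

lemma homeo_cw_le (e : X ≃ₜ Y) : cw X ≤ cw Y := by
  haveI : Nonempty {s : Set X // IsCompact s} := ⟨⟨∅, isCompact_empty⟩⟩
  refine ciSup_le fun C => ?_
  refine le_ciSup_of_le (Cardinal.bddAbove_range _) ⟨e '' C.1, C.2.image e.continuous⟩ ?_
  exact le_of_eq (e.image C.1).tweight_eq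

lemma homeo_cw_eq (e : X ≃ₜ Y) : cw X = cw Y :=
  le_antisymm (homeo_cw_le e) (homeo_cw_le e.symm)

end Invariants

section SpaceX

open Cardinal Set TopologicalSpace Topology

variable (K α Q : Type u) [TopologicalSpace α] [DiscreteTopology α] [Finite α] [Nontrivial α]
  [TopologicalSpace Q] [DiscreteTopology Q]

lemma kcov_le_mk : kcov ((K → α) × Q) ≤ #Q := by
  unfold kcov
  have hmem : #↥(Set.range (fun q : Q => (Set.univ : Set (K → α)) ×ˢ ({q} : Set Q))) ∈
      {c : Cardinal | ∃ S : Set (Set ((K → α) × Q)),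
        (∀ s ∈ S, IsCompact s) ∧ ⋃₀ S = Set.univ ∧ #S = c} := by
    refine ⟨Set.range (fun q : Q => (Set.univ : Set (K → α)) ×ˢ ({q} : Set Q)), ?_, ?_, rfl⟩
    · rintro s ⟨q, rfl⟩
      exact isCompact_univ.prod isCompact_singleton
    · rw [Set.sUnion_range]
      ext x
      simp only [Set.mem_iUnion, Set.mem_univ, iff_true, Set.mem_prod, Set.mem_singleton_iff]
      exact ⟨x.2, trivial, rfl⟩
  exact (csInf_le (OrderBot.bddBelow _) hmem).trans mk_range_le

lemma mk_le_kcov [Infinite Q] : #Q ≤ kcov ((K → α) × Q) := by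
  haveI : Nonempty α := ⟨Classical.arbitrary α⟩
  obtain ⟨S, hSc, hScov, hSk⟩ := csInf_mem (kcov_candidates_nonempty ((K → α) × Q))
  unfold kcov
  rw [← hSk]
  have hQ : (Set.univ : Set Q) ⊆ ⋃ s : S, Prod.snd '' (s : Set ((K → α) × Q)) := by
    intro q _
    have hx : ((Classical.arbitrary (K → α), q) : (K → α) × Q) ∈ ⋃₀ S := by
      rw [hScov]; trivial
    obtain ⟨s, hsS, hmem⟩ := hx
    exact Set.mem_iUnion.2 ⟨⟨s, hsS⟩, ⟨_, hmem, rfl⟩⟩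
  have hfin : ∀ s : S, (Prod.snd '' (s : Set ((K → α) × Q))).Finite := fun s =>
    ((hSc s s.2).image continuous_snd).finite ⟨inferInstance⟩
  rcases finite_or_infinite (↥S) with hSf | hSi
  · exfalso
    exact Set.infinite_univ ((Set.finite_iUnion hfin).subset hQ)
  · calc #Q = #(Set.univ : Set Q) := mk_univ.symm
      _ ≤ #(⋃ s : S, Prod.snd '' (s : Set ((K → α) × Q))) := mk_le_mk_of_subset hQ
      _ ≤ #S * ⨆ s : S, #(Prod.snd '' (s : Set ((K → α) × Q))) := mk_iUnion_le _
      _ ≤ #S * ℵ₀ := by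
          refine mul_le_mul_right (ciSup_le' fun s => ?_) _
          haveI := (hfin s).to_subtype
          exact (lt_aleph0_of_finite _).le
      _ = #S := by
          rw [Cardinal.mul_eq_max (aleph0_le_mk _) le_rfl, max_eq_left (aleph0_le_mk _)]

noncomputable def homeo_slice (q₀ : Q) :
    ↥((Set.univ : Set (K → α)) ×ˢ ({q₀} : Set Q)) ≃ₜ (K → α) :=
  (Homeomorph.Set.prod _ _).trans <|
    ((Homeomorph.Set.univ _).prodCongr
      (Homeomorph.homeomorphOfUnique ↥({q₀} : Set Q) PUnit.{u+1})).trans (Homeomorph.prodPUnit _)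

lemma mk_le_cw [Infinite K] [Nonempty Q] : #K ≤ cw ((K → α) × Q) := by
  obtain ⟨q₀⟩ := (inferInstance : Nonempty Q)
  have hC : IsCompact ((Set.univ : Set (K → α)) ×ˢ ({q₀} : Set Q)) :=
    isCompact_univ.prod isCompact_singleton
  refine le_trans ?_ (le_ciSup (Cardinal.bddAbove_range _)
    (⟨_, hC⟩ : {s : Set ((K → α) × Q) // IsCompact s}))
  exact (mk_le_tweight_pi K α).trans_eq (homeo_slice K α Q q₀).symm.tweight_eq

lemma cw_le_mk [Infinite K] : cw ((K → α) × Q) ≤ #K := by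
  haveI : Nonempty {s : Set ((K → α) × Q) // IsCompact s} := ⟨⟨∅, isCompact_empty⟩⟩
  refine ciSup_le fun C => ?_
  have hF : (Prod.snd '' C.1).Finite := (C.2.image continuous_snd).finite ⟨inferInstance⟩
  have hsub : C.1 ⊆ (Set.univ : Set (K → α)) ×ˢ (Prod.snd '' C.1) := fun x hx =>
    ⟨trivial, ⟨x, hx, rfl⟩⟩
  have h1 : tweight ↥C.1 ≤ tweight ↥((Set.univ : Set (K → α)) ×ˢ (Prod.snd '' C.1)) := by
    refine tweight_le_of_inducing (f := Set.inclusion hsub)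
      (IsInducing.of_comp (continuous_inclusion hsub) continuous_subtype_val ?_)
    exact IsInducing.subtypeVal
  have e : ↥((Set.univ : Set (K → α)) ×ˢ (Prod.snd '' C.1)) ≃ₜ (K → α) × ↥(Prod.snd '' C.1) :=
    (Homeomorph.Set.prod _ _).trans ((Homeomorph.Set.univ _).prodCongr (Homeomorph.refl _))
  have h4 : tweight ↥(Prod.snd '' C.1) ≤ ℵ₀ := by
    haveI := hF.to_subtype
    exact tweight_le_of_finite
  calc tweight ↥C.1 ≤ tweight ((K → α) × ↥(Prod.snd '' C.1)) := h1.trans_eq e.tweight_eq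
    _ ≤ tweight (K → α) * tweight ↥(Prod.snd '' C.1) := tweight_prod_le
    _ ≤ (max #K ℵ₀) * ℵ₀ := mul_le_mul' (tweight_pi_le K α) h4
    _ = max #K ℵ₀ := by
        rw [Cardinal.mul_eq_max (le_max_right _ _) le_rfl, max_eq_left (le_max_right _ _)]
    _ = #K := max_eq_left (aleph0_le_mk K)

lemma not_discrete_spaceX [Infinite K] [Nonempty Q] :
    ¬ DiscreteTopology ((K → α) × Q) := by
  intro hdisc
  obtain ⟨a₀, a₁, hne⟩ := exists_pair_ne α
  obtain ⟨q₀⟩ := (inferInstance : Nonempty Q)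
  have hV : IsOpen {x : K → α | (x, q₀) ∈ ({((fun _ => a₀ : K → α), q₀)} : Set ((K → α) × Q))} :=
    (isOpen_discrete _).preimage (continuous_id.prodMk continuous_const)
  have hfin := finite_support_of_isOpen hne.symm hV ⟨fun _ => a₀, rfl⟩
  refine Set.infinite_univ (hfin.subset ?_)
  intro i _
  intro x hx
  have hxx : x = fun _ => a₀ := (Prod.ext_iff.1 hx).1
  rw [hxx]

lemma mk_le_tweight_spaceX [Infinite K] [Nonempty Q] : #K ≤ tweight ((K → α) × Q) := by
  obtain ⟨q₀⟩ := (inferInstance : Nonempty Q)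
  calc #K ≤ tweight (K → α) := mk_le_tweight_pi K α
    _ = tweight ↥((Set.univ : Set (K → α)) ×ˢ ({q₀} : Set Q)) :=
        (homeo_slice K α Q q₀).symm.tweight_eq.symm ▸ rfl
    _ ≤ tweight ((K → α) × Q) := tweight_le_of_inducing IsInducing.subtypeVal

lemma mk_Q_le_tweight_spaceX : #Q ≤ tweight ((K → α) × Q) := by
  haveI : Nonempty α := ⟨Classical.arbitrary α⟩
  refine le_tweight_of_disjoint_opens
    (fun q : Q => (Set.univ : Set (K → α)) ×ˢ ({q} : Set Q)) ?_ ?_ ?_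
  · exact fun q => isOpen_univ.prod (isOpen_discrete _)
  · exact fun q => ⟨(Classical.arbitrary (K → α), q), trivial, rfl⟩
  · intro i j hij x hxi hxj
    exact hij (hxi.2.symm.trans hxj.2)

end SpaceX

section ZModX

open Cardinal Set TopologicalSpace Topology

variable (p : ℕ) [Fact p.Prime] (K N : Type u)
  [TopologicalSpace (ZMod p)] [DiscreteTopology (ZMod p)]
  [TopologicalSpace (N →₀ ZMod p)] [DiscreteTopology (N →₀ ZMod p)]

/-- Transfer to a universe-`u` copy of `ZMod p`. -/
noncomputable def eX :
    ((K → ZMod p) × (N →₀ ZMod p)) ≃ₜ ((K → ULift.{u} (ZMod p)) × (N →₀ ZMod p)) :=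
  (Homeomorph.piCongrRight (fun _ : K => Homeomorph.ulift.symm)).prodCongr (Homeomorph.refl _)

lemma mk_finsupp_zmod [Infinite N] : #(N →₀ ZMod p) = #N := by
  haveI : NeZero p := ⟨(Fact.out : p.Prime).ne_zero⟩
  haveI : Fact (1 < p) := ⟨(Fact.out : p.Prime).one_lt⟩
  rw [mk_finsupp_lift_of_infinite]
  rw [lift_id', max_eq_left]
  exact (lift_lt_aleph0.2 (lt_aleph0_of_finite _)).le.trans (aleph0_le_mk N)

lemma card_X (hK : Infinite K ∨ IsEmpty K) (hN : Infinite N ∨ IsEmpty N)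
    (hKN : Infinite K ∨ Infinite N) :
    #((K → ZMod p) × (N →₀ ZMod p)) = max ((2 : Cardinal) ^ #K) #N := by
  haveI : NeZero p := ⟨(Fact.out : p.Prime).ne_zero⟩
  haveI : Fact (1 < p) := ⟨(Fact.out : p.Prime).one_lt⟩
  have hzc : #(ZMod p) = (p : Cardinal.{0}) := by rw [mk_fintype, ZMod.card]
  rw [mk_prod, lift_id, lift_id]
  rcases hK with hK | hK
  · haveI := hK
    have h1 : #(K → ZMod p) = 2 ^ #K := by
      rw [mk_arrow, lift_id', hzc, lift_natCast]
      exact nat_power_eq (aleph0_le_mk K) (Fact.out : p.Prime).two_le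
    have h2aleph : ℵ₀ ≤ (2 : Cardinal) ^ #K := (aleph0_le_mk K).trans (cantor #K).le
    rcases hN with hN | hN
    · haveI := hN
      rw [h1, mk_finsupp_zmod p N, Cardinal.mul_eq_max h2aleph (aleph0_le_mk N)]
    · haveI := hN
      have h2 : #(N →₀ ZMod p) = 1 := mk_eq_one _
      rw [h1, h2, mul_one, mk_eq_zero N, max_eq_left (zero_le)]
  · haveI := hK
    haveI hNinf : Infinite N := by
      rcases hKN with h | h
      · haveI := h; exact (hK.false (Classical.arbitrary K)).elim
      · exact h
    have h1 : #(K → ZMod p) = 1 := mk_eq_one _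
    rw [h1, mk_finsupp_zmod p N, one_mul, mk_eq_zero K, power_zero,
      max_eq_right ((one_lt_aleph0.le).trans (aleph0_le_mk N))]

lemma weight_X (hK : Infinite K ∨ IsEmpty K) (hN : Infinite N ∨ IsEmpty N)
    (hKN : Infinite K ∨ Infinite N) :
    tweight ((K → ZMod p) × (N →₀ ZMod p)) = max #K #N := by
  haveI : NeZero p := ⟨(Fact.out : p.Prime).ne_zero⟩
  haveI : Fact (1 < p) := ⟨(Fact.out : p.Prime).one_lt⟩
  rw [(eX p K N).tweight_eq]
  set A := ULift.{u} (ZMod p)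
  have hQ : tweight (N →₀ ZMod p) = #(N →₀ ZMod p) := tweight_discrete
  apply le_antisymm
  · refine tweight_prod_le.trans ?_
    rcases hK with hK | hK
    · haveI := hK
      have hP : tweight (K → A) ≤ #K :=
        (tweight_pi_le K A).trans_eq (max_eq_left (aleph0_le_mk K))
      rcases hN with hN | hN
      · haveI := hN
        calc tweight (K → A) * tweight (N →₀ ZMod p) ≤ #K * #N :=
              mul_le_mul' hP (le_of_eq (hQ.trans (mk_finsupp_zmod p N)))
          _ = max #K #N := Cardinal.mul_eq_max (aleph0_le_mk K) (aleph0_le_mk N)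
      · haveI := hN
        have h2 : #(N →₀ ZMod p) = 1 := mk_eq_one _
        calc tweight (K → A) * tweight (N →₀ ZMod p) ≤ #K * 1 :=
              mul_le_mul' hP (le_of_eq (hQ.trans h2))
          _ = #K := mul_one _
          _ ≤ max #K #N := le_max_left _ _
    · haveI := hK
      haveI hNinf : Infinite N := by
        rcases hKN with h | h
        · haveI := h; exact (hK.false (Classical.arbitrary K)).elim
        · exact h
      have hP : tweight (K → A) ≤ ℵ₀ := tweight_le_of_finite
      calc tweight (K → A) * tweight (N →₀ ZMod p) ≤ ℵ₀ * #N :=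
            mul_le_mul' hP (le_of_eq (hQ.trans (mk_finsupp_zmod p N)))
        _ = #N := by
            rw [Cardinal.mul_eq_max le_rfl (aleph0_le_mk N),
              max_eq_right (aleph0_le_mk N)]
        _ ≤ max #K #N := le_max_right _ _
  · refine max_le ?_ ?_
    · rcases hK with hK | hK
      · haveI := hK
        haveI : Nonempty (N →₀ ZMod p) := ⟨0⟩
        exact mk_le_tweight_spaceX K A (N →₀ ZMod p)
      · haveI := hK
        exact (mk_eq_zero K).trans_le (zero_le)
    · rcases hN with hN | hN
      · haveI := hN
        calc #N = #(N →₀ ZMod p) := (mk_finsupp_zmod p N).symm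
          _ ≤ tweight ((K → A) × (N →₀ ZMod p)) :=
              mk_Q_le_tweight_spaceX K A (N →₀ ZMod p)
      · haveI := hN
        exact (mk_eq_zero N).trans_le (zero_le)

end ZModX

/-- The locally compact groups `F_{k,n} = (∏_k ℤ/pℤ) × (⊕_n ℤ/pℤ)` (compact product
topology times discrete topology) have cardinality `max (2 ^ k) n` and weight
`max k n`; for distinct pairs `(k, n)` they are pairwise non-homeomorphic. -/
theorem stmt_19 (p : ℕ) [Fact p.Prime] :
    ∀ K N : Type u, (Infinite K ∨ IsEmpty K) → (Infinite N ∨ IsEmpty N) →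
      (Infinite K ∨ Infinite N) →
      letI : TopologicalSpace (ZMod p) := ⊥
      letI : TopologicalSpace (N →₀ ZMod p) := ⊥
      (#((K → ZMod p) × (N →₀ ZMod p)) = max ((2 : Cardinal) ^ #K) #N ∧
        tweight ((K → ZMod p) × (N →₀ ZMod p)) = max #K #N) ∧
      ∀ K' N' : Type u, (Infinite K' ∨ IsEmpty K') → (Infinite N' ∨ IsEmpty N') →
        (Infinite K' ∨ Infinite N') → (#K ≠ #K' ∨ #N ≠ #N') →
        letI : TopologicalSpace (N' →₀ ZMod p) := ⊥
        IsEmpty (((K → ZMod p) × (N →₀ ZMod p)) ≃ₜ ((K' → ZMod p) × (N' →₀ ZMod p))) := by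
  haveI : NeZero p := ⟨(Fact.out : p.Prime).ne_zero⟩
  haveI : Fact (1 < p) := ⟨(Fact.out : p.Prime).one_lt⟩
  intro K N hK hN hKN
  letI : TopologicalSpace (ZMod p) := ⊥
  haveI : DiscreteTopology (ZMod p) := discreteTopology_bot _
  letI : TopologicalSpace (N →₀ ZMod p) := ⊥
  haveI : DiscreteTopology (N →₀ ZMod p) := discreteTopology_bot _
  refine ⟨⟨card_X p K N hK hN hKN, weight_X p K N hK hN hKN⟩, ?_⟩
  intro K' N' hK' hN' hKN' hne
  letI : TopologicalSpace (N' →₀ ZMod p) := ⊥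
  haveI : DiscreteTopology (N' →₀ ZMod p) := discreteTopology_bot _
  constructor
  intro e
  have ee : ((K → ULift.{u} (ZMod p)) × (N →₀ ZMod p)) ≃ₜ
      ((K' → ULift.{u} (ZMod p)) × (N' →₀ ZMod p)) :=
    ((eX p K N).symm.trans e).trans (eX p K' N')
  have hNN : #N = #N' := by
    rcases hN with hN | hN <;> rcases hN' with hN' | hN'
    · haveI := hN; haveI := hN'
      have hle : #(N →₀ ZMod p) ≤ #(N' →₀ ZMod p) := by
        calc #(N →₀ ZMod p) ≤ kcov ((K → ULift.{u} (ZMod p)) × (N →₀ ZMod p)) :=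
              mk_le_kcov K (ULift.{u} (ZMod p)) _
          _ = kcov ((K' → ULift.{u} (ZMod p)) × (N' →₀ ZMod p)) := homeo_kcov_eq ee
          _ ≤ #(N' →₀ ZMod p) := kcov_le_mk K' (ULift.{u} (ZMod p)) _
      have hge : #(N' →₀ ZMod p) ≤ #(N →₀ ZMod p) := by
        calc #(N' →₀ ZMod p) ≤ kcov ((K' → ULift.{u} (ZMod p)) × (N' →₀ ZMod p)) :=
              mk_le_kcov K' (ULift.{u} (ZMod p)) _
          _ = kcov ((K → ULift.{u} (ZMod p)) × (N →₀ ZMod p)) := homeo_kcov_eq ee.symm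
          _ ≤ #(N →₀ ZMod p) := kcov_le_mk K (ULift.{u} (ZMod p)) _
      have := le_antisymm hle hge
      rwa [mk_finsupp_zmod p N, mk_finsupp_zmod p N'] at this
    · exfalso
      haveI := hN; haveI := hN'
      have h3 : #(N' →₀ ZMod p) = 1 := mk_eq_one _
      have habs : ℵ₀ ≤ (1 : Cardinal) := by
        calc ℵ₀ ≤ #(N →₀ ZMod p) := aleph0_le_mk _
          _ ≤ kcov ((K → ULift.{u} (ZMod p)) × (N →₀ ZMod p)) :=
              mk_le_kcov K (ULift.{u} (ZMod p)) _
          _ = kcov ((K' → ULift.{u} (ZMod p)) × (N' →₀ ZMod p)) := homeo_kcov_eq ee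
          _ ≤ #(N' →₀ ZMod p) := kcov_le_mk K' (ULift.{u} (ZMod p)) _
          _ = 1 := h3
      exact one_lt_aleph0.not_ge habs
    · exfalso
      haveI := hN; haveI := hN'
      have h3 : #(N →₀ ZMod p) = 1 := mk_eq_one _
      have habs : ℵ₀ ≤ (1 : Cardinal) := by
        calc ℵ₀ ≤ #(N' →₀ ZMod p) := aleph0_le_mk _
          _ ≤ kcov ((K' → ULift.{u} (ZMod p)) × (N' →₀ ZMod p)) :=
              mk_le_kcov K' (ULift.{u} (ZMod p)) _
          _ = kcov ((K → ULift.{u} (ZMod p)) × (N →₀ ZMod p)) := homeo_kcov_eq ee.symm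
          _ ≤ #(N →₀ ZMod p) := kcov_le_mk K (ULift.{u} (ZMod p)) _
          _ = 1 := h3
      exact one_lt_aleph0.not_ge habs
    · haveI := hN; haveI := hN'
      rw [mk_eq_zero N, mk_eq_zero N']
  have hKK : #K = #K' := by
    rcases hK with hK | hK <;> rcases hK' with hK' | hK'
    · haveI := hK; haveI := hK'
      haveI : Nonempty (N →₀ ZMod p) := ⟨0⟩
      haveI : Nonempty (N' →₀ ZMod p) := ⟨0⟩
      have c1 : cw ((K → ULift.{u} (ZMod p)) × (N →₀ ZMod p)) = #K :=
        le_antisymm (cw_le_mk K (ULift.{u} (ZMod p)) _) (mk_le_cw K (ULift.{u} (ZMod p)) _)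
      have c2 : cw ((K' → ULift.{u} (ZMod p)) × (N' →₀ ZMod p)) = #K' :=
        le_antisymm (cw_le_mk K' (ULift.{u} (ZMod p)) _) (mk_le_cw K' (ULift.{u} (ZMod p)) _)
      rw [← c1, ← c2, homeo_cw_eq ee]
    · exfalso
      haveI := hK; haveI := hK'
      haveI : Nonempty (N →₀ ZMod p) := ⟨0⟩
      haveI : DiscreteTopology ((K' → ULift.{u} (ZMod p)) × (N' →₀ ZMod p)) := inferInstance
      exact not_discrete_spaceX K (ULift.{u} (ZMod p)) (N →₀ ZMod p)
        (ee.isEmbedding.discreteTopology)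
    · exfalso
      haveI := hK; haveI := hK'
      haveI : Nonempty (N' →₀ ZMod p) := ⟨0⟩
      haveI : DiscreteTopology ((K → ULift.{u} (ZMod p)) × (N →₀ ZMod p)) := inferInstance
      exact not_discrete_spaceX K' (ULift.{u} (ZMod p)) (N' →₀ ZMod p)
        (ee.symm.isEmbedding.discreteTopology)
    · haveI := hK; haveI := hK'
      rw [mk_eq_zero K, mk_eq_zero K']
  rcases hne with h | h
  · exact h hKK
  · exact h hNN
end
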